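/- In any monoid containing elements s_1, …, s_{n−1} satisfying the braid relations, for all 1 ≤ k ≤ r < n one has ν_r^{k,n} = [n;r][n−1;r−1]⋯[n−r+k;k]; that is, the two products [k;r+1][k+1;r+2]⋯[k+n−r−1;n] and [n;r][n−1;r−1]⋯[n−r+k;k] are equal. -/

import Mathlib

namespace BraidMonoid

variable {M : Type*} [Monoid M]

/-- `br g a b` is the element `[a;b]` of the paper: for `a ≤ b` it is the descending
product `g (b-1) * g (b-2) * ⋯ * g a`, for `b < a` it is the ascending product
`g b * g (b+1) * ⋯ * g (a-1)`, and `br g a a = 1`. -/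
def br (g : ℕ → M) (a b : ℕ) : M :=
  if a ≤ b then (((List.range (b - a)).map (fun j => g (a + j))).reverse).prod
  else ((List.range (a - b)).map (fun j => g (b + j))).prod

/-- `nu g r K N` is `ν_r^{K,N} = [K;r+1][K+1;r+2]⋯[K+N-r-1;N]`. -/
def nu (g : ℕ → M) (r K N : ℕ) : M :=
  ((List.range (N - r)).map (fun j => br g (K + j) (r + 1 + j))).prod

/-- The braid relations for the elements `g 1, …, g (n-1)`. -/
def BraidRels (g : ℕ → M) (n : ℕ) : Prop :=
  (∀ i, 1 ≤ i → i + 1 ≤ n - 1 → g i * g (i + 1) * g i = g (i + 1) * g i * g (i + 1)) ∧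
  (∀ i j, 1 ≤ i → j ≤ n - 1 → i + 1 < j → g i * g j = g j * g i)

/-- `π` is an `r`-shuffle: it is strictly increasing on the first `r` positions and on
the remaining positions (0-indexed). -/
def IsShuffle (n r : ℕ) (π : Equiv.Perm (Fin n)) : Prop :=
  (∀ i j : Fin n, i < j → (j : ℕ) < r → π i < π j) ∧
  (∀ i j : Fin n, i < j → r ≤ (i : ℕ) → π i < π j)

/-- `[π]_{(t)} = [t+1; t+π(1)] [t+2; t+π(2)] ⋯ [t+r; t+π(r)]` (1-indexed; here `π` is
0-indexed, so position `i` contributes `[t+i+1; t+π(i)+1]`). -/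
def brShuffleShift (g : ℕ → M) (t N r : ℕ) (π : Equiv.Perm (Fin N)) : M :=
  (((List.finRange N).take r).map (fun (i : Fin N) => br g (t + (i : ℕ) + 1) (t + (π i : ℕ) + 1))).prod

/-- `[π] = [1;π(1)][2;π(2)]⋯[r;π(r)]`. -/
def brShuffle (g : ℕ → M) (N r : ℕ) (π : Equiv.Perm (Fin N)) : M :=
  brShuffleShift g 0 N r π

end BraidMonoid


namespace Stmt2Aux

variable {M : Type*} [Monoid M]

/-- Ascending product `g a * g (a+1) * ⋯ * g (a+len-1)`. -/
def asc (g : ℕ → M) (a len : ℕ) : M :=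
  ((List.range len).map (fun j => g (a + j))).prod

/-- Descending product `g (a+len-1) * ⋯ * g a`. -/
def desc (g : ℕ → M) (a len : ℕ) : M :=
  (((List.range len).map (fun j => g (a + j))).reverse).prod

lemma asc_succ (g : ℕ → M) (a len : ℕ) :
    asc g a (len + 1) = asc g a len * g (a + len) := by
  simp [asc, List.range_succ]

lemma desc_succ (g : ℕ → M) (a len : ℕ) :
    desc g a (len + 1) = g (a + len) * desc g a len := by
  simp [desc, List.range_succ]

lemma br_eq_desc (g : ℕ → M) {a b : ℕ} (h : a ≤ b) :
    BraidMonoid.br g a b = desc g a (b - a) := by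
  rw [BraidMonoid.br, if_pos h]; rfl

lemma br_eq_asc (g : ℕ → M) {a b : ℕ} (h : ¬ a ≤ b) :
    BraidMonoid.br g a b = asc g b (a - b) := by
  rw [BraidMonoid.br, if_neg h]; rfl

lemma commute_asc (g : ℕ → M) {B : ℕ}
    (hc : ∀ i j, 1 ≤ i → i + 1 < j → j ≤ B → g i * g j = g j * g i)
    {a len t : ℕ} (ha : 1 ≤ a) (ht : a + len < t) (htB : t ≤ B) :
    Commute (g t) (asc g a len) := by
  apply Commute.list_prod_right
  intro b hb
  simp only [List.mem_map, List.mem_range] at hb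
  obtain ⟨j, hj, rfl⟩ := hb
  have h := hc (a + j) t (by omega) (by omega) htB
  exact (show Commute (g (a + j)) (g t) from h).symm

/-- Key step: multiplying the stack of ascending rows on the right by a descending
column extends each row by one letter, using only far commutations. -/
lemma key (g : ℕ → M) {B : ℕ}
    (hc : ∀ i j, 1 ≤ i → i + 1 < j → j ≤ B → g i * g j = g j * g i) :
    ∀ (d K m : ℕ), 1 ≤ K → K + d + m ≤ B →
    ((List.range (d + 1)).map (fun j => asc g (K + d - j) m)).prod * desc g (K + m) (d + 1)
      = ((List.range (d + 1)).map (fun j => asc g (K + d - j) (m + 1))).prod := by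
  intro d
  induction d with
  | zero =>
    intro K m hK hB
    have h0 : List.range (0 + 1) = [0] := rfl
    rw [h0]
    simp only [List.map_cons, List.map_nil, List.prod_cons, List.prod_nil,
      Nat.sub_zero, mul_one]
    rw [desc_succ, asc_succ]
    have hd0 : desc g (K + m) 0 = 1 := by simp [desc]
    rw [hd0, mul_one]
    have : K + m + 0 = K + 0 + m := by omega
    rw [this]
  | succ d ih =>
    intro K m hK hB
    have hrange : List.range (d + 1 + 1) = 0 :: (List.range (d + 1)).map Nat.succ :=
      List.range_succ_eq_map
    rw [hrange, List.map_cons, List.map_cons, List.prod_cons, List.prod_cons,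
      List.map_map, List.map_map]
    have hmapL : (List.range (d + 1)).map ((fun j => asc g (K + (d + 1) - j) m) ∘ Nat.succ)
        = (List.range (d + 1)).map (fun j => asc g (K + d - j) m) := by
      apply List.map_congr_left
      intro j hj
      simp only [Function.comp]
      congr 1
      omega
    have hmapR : (List.range (d + 1)).map ((fun j => asc g (K + (d + 1) - j) (m + 1)) ∘ Nat.succ)
        = (List.range (d + 1)).map (fun j => asc g (K + d - j) (m + 1)) := by
      apply List.map_congr_left
      intro j hj
      simp only [Function.comp]
      congr 1
      omega
    rw [hmapL, hmapR, desc_succ]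
    have h0 : K + (d + 1) - 0 = K + d + 1 := by omega
    rw [h0]
    have hcomm : Commute (g (K + m + (d + 1)))
        (((List.range (d + 1)).map (fun j => asc g (K + d - j) m)).prod) := by
      apply Commute.list_prod_right
      intro b hb
      simp only [List.mem_map, List.mem_range] at hb
      obtain ⟨j, hj, rfl⟩ := hb
      exact commute_asc g hc (by omega) (by omega) (by omega)
    have e1 : ((List.range (d + 1)).map (fun j => asc g (K + d - j) m)).prod *
        (g (K + m + (d + 1)) * desc g (K + m) (d + 1))
        = g (K + m + (d + 1)) *
          (((List.range (d + 1)).map (fun j => asc g (K + d - j) m)).prod *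
            desc g (K + m) (d + 1)) := by
      rw [← mul_assoc, ← hcomm.eq, mul_assoc]
    rw [mul_assoc, e1, ih K m hK (by omega), ← mul_assoc]
    have e2 : K + m + (d + 1) = K + d + 1 + m := by omega
    rw [e2, ← asc_succ]

lemma main (g : ℕ → M) {B : ℕ}
    (hc : ∀ i j, 1 ≤ i → i + 1 < j → j ≤ B → g i * g j = g j * g i) :
    ∀ (m d K : ℕ), 1 ≤ K → K + d + m ≤ B + 1 →
    BraidMonoid.nu g (K + d) K (K + d + m)
      = ((List.range (d + 1)).map (fun j => asc g (K + d - j) m)).prod := by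
  intro m
  induction m with
  | zero =>
    intro d K hK hB
    have h1 : K + d + 0 - (K + d) = 0 := by omega
    rw [BraidMonoid.nu, h1]
    simp [asc]
  | succ m ih =>
    intro d K hK hB
    have h1 : K + d + (m + 1) - (K + d) = m + 1 := by omega
    rw [BraidMonoid.nu, h1, List.range_succ, List.map_append, List.prod_append]
    have h2 : ((List.range m).map (fun j => BraidMonoid.br g (K + j) (K + d + 1 + j))).prod
        = BraidMonoid.nu g (K + d) K (K + d + m) := by
      rw [BraidMonoid.nu]
      have : K + d + m - (K + d) = m := by omega
      rw [this]
    rw [List.map_singleton, List.prod_singleton, h2, ih d K hK (by omega)]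
    have h3 : BraidMonoid.br g (K + m) (K + d + 1 + m) = desc g (K + m) (d + 1) := by
      rw [br_eq_desc g (by omega)]
      congr 1
      omega
    rw [h3]
    exact key g hc d K m hK (by omega)

end Stmt2Aux

open BraidMonoid in
/-- relation (2.7): in a monoid whose elements `g 1, …, g (n-1)` satisfy the
braid relations, for `1 ≤ K ≤ r < n` one has
`ν_r^{K,n} = [n;r][n-1;r-1]⋯[n-r+K;K]`. -/
theorem stmt2 {M : Type*} [Monoid M] (n : ℕ) (g : ℕ → M) (hg : BraidRels g n)
    (K r : ℕ) (h1 : 1 ≤ K) (h2 : K ≤ r) (h3 : r < n) :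
    nu g r K n = ((List.range (r - K + 1)).map (fun j => br g (n - j) (r - j))).prod := by
  obtain ⟨hbr, hcomm⟩ := hg
  have hc : ∀ i j, 1 ≤ i → i + 1 < j → j ≤ n - 1 → g i * g j = g j * g i := by
    intro i j hi hij hj
    exact hcomm i j hi hj hij
  obtain ⟨d, rfl⟩ : ∃ d, r = K + d := ⟨r - K, by omega⟩
  obtain ⟨m, rfl⟩ : ∃ m, n = K + d + m := ⟨n - (K + d), by omega⟩
  have hm : 1 ≤ m := by omega
  rw [Stmt2Aux.main g hc m d K h1 (by omega)]
  have hlen : K + d - K + 1 = d + 1 := by omega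
  rw [hlen]
  congr 1
  apply List.map_congr_left
  intro j hj
  rw [List.mem_range] at hj
  rw [Stmt2Aux.br_eq_asc g (by omega)]
  congr 1
  omega
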